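/- Let G be a finite group that possesses a maximal subgroup which is normal in G. Then any two non-isolated vertices of Γ(G) lie in the same connected component; that is, any two non-trivial proper subgroups of G, each adjacent to at least one vertex of Γ(G), are joined by a path in Γ(G). -/

import Mathlib

open scoped Pointwise

/-- The co-maximal subgroup graph `Γ(G)`: vertices are the non-trivial proper
subgroups of `G`, and two distinct vertices `H`, `K` are adjacent iff `HK = G`
as a setwise product. -/
def comaximalGraph (G : Type*) [Group G] :
    SimpleGraph {H : Subgroup G // H ≠ ⊥ ∧ H ≠ ⊤} where
  Adj H K := H ≠ K ∧ ((H.1 : Set G) * (K.1 : Set G) = Set.univ)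
  symm := by
    constructor
    rintro H K ⟨hne, hmul⟩
    refine ⟨hne.symm, ?_⟩
    have h := congrArg (fun s : Set G => s⁻¹) hmul
    simpa [mul_inv_rev] using h
  loopless := by
    constructor
    rintro H ⟨hne, _⟩
    exact hne rfl

/-- If a finite group `G` has a maximal subgroup which is normal, then any two
non-isolated vertices of `Γ(G)` lie in the same connected component. -/
theorem comaximal_reachable_of_normal_maximal {G : Type*} [Group G] [Finite G]
    (hM : ∃ M : Subgroup G, IsCoatom M ∧ M.Normal)
    (H K : {H : Subgroup G // H ≠ ⊥ ∧ H ≠ ⊤})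
    (hH : ∃ L, (comaximalGraph G).Adj H L)
    (hK : ∃ L, (comaximalGraph G).Adj K L) :
    (comaximalGraph G).Reachable H K := by
  obtain ⟨M, hMco, hMnorm⟩ := hM
  have hMbot : M ≠ ⊥ := by
    rintro rfl
    exact H.2.2 (hMco.2 _ (bot_lt_iff_ne_bot.mpr H.2.1))
  have hMtop : M ≠ ⊤ := hMco.1
  set Mv : {H : Subgroup G // H ≠ ⊥ ∧ H ≠ ⊤} := ⟨M, hMbot, hMtop⟩ with hMv
  have key : ∀ (X : {H : Subgroup G // H ≠ ⊥ ∧ H ≠ ⊤}),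
      (∃ L, (comaximalGraph G).Adj X L) → (comaximalGraph G).Reachable X Mv := by
    rintro X ⟨L, hne, hmul⟩
    by_cases hXM : X.1 ≤ M
    · have hLM : Mv ≠ L := by
        rintro rfl
        have hsub : (X.1 : Set G) * (M : Set G) ⊆ (M : Set G) := by
          rintro x ⟨a, ha, b, hb, rfl⟩
          exact M.mul_mem (hXM ha) hb
        rw [hmul] at hsub
        exact hMtop ((Subgroup.eq_top_iff' M).mpr fun x => hsub (Set.mem_univ x))
      have hmul2 : (M : Set G) * (L.1 : Set G) = Set.univ := by
        apply Set.eq_univ_of_univ_subset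
        rw [← hmul]
        exact Set.mul_subset_mul (by exact_mod_cast hXM) le_rfl
      have hadj : (comaximalGraph G).Adj Mv L := by exact ⟨hLM, hmul2⟩
      have hadj1 : (comaximalGraph G).Adj X L := by exact ⟨hne, hmul⟩
      exact hadj1.reachable.trans hadj.symm.reachable
    · by_cases hXeq : X = Mv
      · exact hXeq ▸ SimpleGraph.Reachable.refl _
      · have hsup : X.1 ⊔ M = ⊤ :=
          hMco.2 _ (lt_of_le_of_ne le_sup_right (fun h => hXM (h ▸ le_sup_left)))
        have hmul2 : (X.1 : Set G) * (M : Set G) = Set.univ := by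
          rw [← Subgroup.mul_normal X.1 M, hsup]
          simp
        have hadj : (comaximalGraph G).Adj X Mv := by exact ⟨hXeq, hmul2⟩
        exact hadj.reachable
  exact (key H hH).trans (key K hK).symm
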